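/- Let ρ ∈ (0,1) with ρ ≠ 1/2 and let f, g be negative real numbers. Set κ = (1−ρ)/ρ and, for ω > 0, γ(ω) = (f + iωg + ω²)/(f + iωg); let μ₊(ω), μ₋(ω) be the two roots of ρx² − γ(ω)x + (1−ρ) = 0. Then there exist ω > 0, c > 1 and M₀ such that for all integers M ≥ M₀ one has μ₊(ω)^M + μ₋(ω)^M ≠ 0 and |(κ^M + 1)/(μ₊(ω)^M + μ₋(ω)^M)| ≥ c^M. (This is the harmonic instability half of the theorem that the ring-road flock is harmonically stable if and only if ρ = 1/2 with f and g negative: for ρ ≠ 1/2 the supremum over ω of the frequency response of the middle agent grows exponentially in the flock size.) -/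

import Mathlib

/-- `γ(ω) = (f + iωg + ω²)/(f + iωg)`. -/
noncomputable def gam (f g ω : ℝ) : ℂ :=
  ((f : ℂ) + Complex.I * ω * g + (ω : ℂ) ^ 2) / ((f : ℂ) + Complex.I * ω * g)

noncomputable def Complex.abs : AbsoluteValue ℂ ℝ := NormedField.toAbsoluteValue ℂ

theorem Complex.abs_apply (z : ℂ) : Complex.abs z = Real.sqrt (Complex.normSq z) := Complex.norm_def z

theorem Complex.abs_ofReal (r : ℝ) : Complex.abs (r : ℂ) = |r| := Complex.norm_real r

theorem Complex.sq_abs (z : ℂ) : Complex.abs z ^ 2 = Complex.normSq z := Complex.sq_norm z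

theorem Complex.abs_re_le_abs (z : ℂ) : |z.re| ≤ Complex.abs z := Complex.abs_re_le_norm z

theorem stmt_14 (ρ : ℝ) (hρ : ρ ∈ Set.Ioo (0 : ℝ) 1) (hρ' : ρ ≠ 1 / 2)
    (f g : ℝ) (hf : f < 0) (hg : g < 0) :
    ∃ ω : ℝ, 0 < ω ∧
      ∀ μp μm : ℂ,
        (∀ x : ℂ, (ρ : ℂ) * x ^ 2 - gam f g ω * x + (1 - (ρ : ℂ))
            = (ρ : ℂ) * (x - μp) * (x - μm)) →
        ∃ c : ℝ, 1 < c ∧ ∃ M₀ : ℕ, ∀ M : ℕ, M₀ ≤ M →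
          μp ^ M + μm ^ M ≠ 0 ∧
          c ^ M ≤ ‖
            (((((1 - ρ) / ρ : ℝ) : ℂ) ^ M + 1) / (μp ^ M + μm ^ M))‖ := by
  obtain ⟨hρ0, hρ1⟩ := hρ
  set κ : ℝ := (1 - ρ) / ρ with hκdef
  have hκ0 : 0 < κ := div_pos (by linarith) hρ0
  have hκ1 : κ ≠ 1 := by
    intro h
    rw [hκdef, div_eq_one_iff_eq (ne_of_gt hρ0)] at h
    exact hρ' (by linarith)
  set L : ℝ := max 1 κ with hLdef
  set P : ℝ := min 1 κ with hPdef
  have hL1 : 1 ≤ L := le_max_left _ _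
  have hL0 : 0 < L := lt_of_lt_of_le one_pos hL1
  have hP0 : 0 < P := lt_min one_pos hκ0
  have hP1 : P ≤ L := min_le_max
  have hPL : P < L := by
    rcases lt_or_gt_of_ne hκ1 with h | h
    · rw [hLdef, hPdef, max_eq_left h.le, min_eq_right h.le]; exact h
    · rw [hLdef, hPdef, max_eq_right h.le, min_eq_left h.le]; exact h
  set d : ℝ := L - P with hddef
  have hd0 : 0 < d := by rw [hddef]; linarith
  have hdL : d ≤ L := by rw [hddef]; linarith
  have hLPsum : L + P = 1 + κ := max_add_min 1 κ
  have hLPmul : L * P = κ := by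
    rcases le_total 1 κ with h | h
    · rw [hLdef, hPdef, max_eq_right h, min_eq_left h]; ring
    · rw [hLdef, hPdef, max_eq_left h, min_eq_right h]; ring
  have hsum : ρ * (L + P) = 1 := by
    rw [hLPsum, hκdef]; field_simp; ring
  have hprod : ρ * (L * P) = 1 - ρ := by
    rw [hLPmul, hκdef]; field_simp
  -- choice of ω
  set ε : ℝ := ρ ^ 2 * d ^ 2 / (64 * L) with hεdef
  have hε0 : 0 < ε := by rw [hεdef]; positivity
  have hnf0 : (0:ℝ) < -f := by linarith
  have hng0 : (0:ℝ) < -g := by linarith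
  have hsq0 : 0 < ε * (-f) := mul_pos hε0 hnf0
  set ω : ℝ := min (Real.sqrt (ε * (-f)) / 2) ((-f) / (-g)) with hωdef
  have hω0 : 0 < ω := lt_min (by positivity) (div_pos hnf0 hng0)
  have hωg : ω * (-g) ≤ -f := by
    have h := min_le_right (Real.sqrt (ε * (-f)) / 2) ((-f) / (-g))
    have h2 : ω * (-g) ≤ ((-f) / (-g)) * (-g) :=
      mul_le_mul_of_nonneg_right h hng0.le
    rwa [div_mul_cancel₀ _ (ne_of_gt hng0)] at h2
  have hω2 : ω ^ 2 < ε * (-f) := by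
    have h := min_le_left (Real.sqrt (ε * (-f)) / 2) ((-f) / (-g))
    have hs := Real.sq_sqrt hsq0.le
    have h2 : ω * ω ≤ (Real.sqrt (ε * (-f)) / 2) * (Real.sqrt (ε * (-f)) / 2) :=
      mul_le_mul h h hω0.le (by positivity)
    nlinarith only [h2, hs, hsq0]
  refine ⟨ω, hω0, ?_⟩
  clear_value κ L P d ε ω
  -- complex quantities
  set D : ℂ := (f : ℂ) + Complex.I * ω * g with hDdef
  have hDre : D.re = f := by simp [hDdef]
  have hDim : D.im = ω * g := by simp [hDdef]
  have hD0 : D ≠ 0 := by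
    intro h
    rw [h] at hDre
    simp at hDre
    linarith [hDre]
  have hf2 : 0 < f ^ 2 := by nlinarith only [hf]
  have harg : 0 < f ^ 2 + (ω * g) ^ 2 := by nlinarith only [sq_nonneg (ω * g), hf2]
  set s : ℝ := Real.sqrt (f ^ 2 + (ω * g) ^ 2) with hsdef
  have hs0 : 0 < s := Real.sqrt_pos.mpr harg
  have hs2 : s ^ 2 = f ^ 2 + (ω * g) ^ 2 := Real.sq_sqrt harg.le
  have hnsq : Complex.normSq D = s ^ 2 := by
    rw [Complex.normSq_apply, hDre, hDim, hs2]; ring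
  have habsD : Complex.abs D = s := by
    rw [Complex.abs_apply, hnsq, Real.sqrt_sq hs0.le]
  set e : ℂ := ((ω ^ 2 : ℝ) : ℂ) / D with hedef
  set E : ℝ := ω ^ 2 / s with hEdef
  have hE0 : 0 < E := div_pos (pow_pos hω0 2) hs0
  have habse : Complex.abs e = E := by
    rw [hedef, map_div₀, habsD, Complex.abs_ofReal, abs_of_pos (pow_pos hω0 2), hEdef]
  have hgam : gam f g ω = 1 + e := by
    rw [hedef, hDdef]
    unfold gam
    have hD0' : (f : ℂ) + Complex.I * ω * g ≠ 0 := by rw [← hDdef]; exact hD0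
    field_simp
    all_goals push_cast
    all_goals ring
  have hDSE : True := trivial
  have hre : e.re = ω ^ 2 * f / s ^ 2 := by
    rw [hedef, Complex.div_re, hnsq, hDre, hDim]
    simp only [Complex.ofReal_re, Complex.ofReal_im]
    ring
  clear_value D s e E
  have hsle2f : s ≤ 2 * (-f) := by
    have hgg : (ω * (-g)) * (ω * (-g)) ≤ (-f) * (-f) :=
      mul_le_mul hωg hωg (by positivity) hnf0.le
    have h1 : s ^ 2 ≤ (2 * (-f)) ^ 2 := by
      rw [hs2]; nlinarith only [hgg]
    nlinarith only [hs0.le, h1, hnf0]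
  have here : e.re ≤ -E / 2 := by
    rw [hre, hEdef]
    rw [div_le_div_iff₀ (by positivity) (by norm_num : (0:ℝ) < 2)]
    have h1 : -(ω ^ 2 / s) * s ^ 2 = -(ω ^ 2 * s) := by field_simp
    rw [h1]
    nlinarith only [mul_le_mul_of_nonneg_left hsle2f (sq_nonneg ω), hω0, hs0, hf]
  have hsgef : -f ≤ s := by nlinarith only [hs2, hs0.le, sq_nonneg (ω * g), hnf0]
  have hEε : E < ε := by
    have h1 : E ≤ ω ^ 2 / (-f) := by
      rw [hEdef]
      exact div_le_div_of_nonneg_left (pow_pos hω0 2).le hnf0 hsgef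
    have h2 : ω ^ 2 / (-f) < ε := by
      rw [div_lt_iff₀ hnf0]; linarith [hω2]
    linarith
  have hE64 : E * (64 * L) < ρ ^ 2 * d ^ 2 := by
    have h3 : ε * (64 * L) = ρ ^ 2 * d ^ 2 := by
      rw [hεdef]; field_simp
    nlinarith only [mul_lt_mul_of_pos_right hEε (by nlinarith only [hL0] : (0:ℝ) < 64 * L), h3]

  -- derived constants
  set C1 : ℝ := 2 * L / (ρ * d) with hC1def
  set c1 : ℝ := L / (4 * (ρ * d)) with hc1def
  have hρd0 : 0 < ρ * d := mul_pos hρ0 hd0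
  have hC1ρd : C1 * (ρ * d) = 2 * L := by
    rw [hC1def]; field_simp
  have hc1ρd : c1 * (4 * (ρ * d)) = L := by
    rw [hc1def]; field_simp
  have hC10 : 0 < C1 := div_pos (by nlinarith only [hL0]) hρd0
  have hc10 : 0 < c1 := div_pos hL0 (by nlinarith only [hρd0])
  clear_value C1 c1
  have hC1E : C1 * E < ρ * d / 32 := by
    have t1 : E * (C1 * (ρ * d)) = E * (2 * L) := by rw [hC1ρd]
    have h32 : C1 * E * 32 * (ρ * d) < ρ * d * (ρ * d) := by nlinarith only [hE64, t1]
    have hX : C1 * E * 32 < ρ * d := by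
      by_contra hcon
      push_neg at hcon
      nlinarith only [hcon, h32, hρd0]
    linarith only [hX]
  have hc1E : c1 * E < ρ * d / 256 := by
    have t2 : E * (c1 * (4 * (ρ * d))) = E * L := by rw [hc1ρd]
    have h256 : c1 * E * 256 * (ρ * d) < ρ * d * (ρ * d) := by nlinarith only [hE64, t2]
    have hX : c1 * E * 256 < ρ * d := by
      by_contra hcon
      push_neg at hcon
      nlinarith only [hcon, h256, hρd0]
    linarith only [hX]
  have h16E : 16 * E ≤ ρ * d := by
    have h1 : ρ * d ≤ L := by nlinarith only [hρ1, hdL, hd0, hρ0]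
    have h2 : ρ ^ 2 * d ^ 2 ≤ ρ * d * L := by nlinarith only [h1, hρd0]
    have h3 : 64 * E * L ≤ ρ * d * L := by nlinarith only [hE64, h2]
    have h4 : 64 * E ≤ ρ * d := le_of_mul_le_mul_right (by linarith only [h3]) hL0
    linarith only [h4, hE0]
  have hρdd : ρ ^ 2 * d ^ 2 ≤ ρ * d ^ 2 :=
    mul_le_mul_of_nonneg_right (by nlinarith only [hρ0, hρ1]) (sq_nonneg d)
  have hELd : 16 * (E * L) < ρ * d ^ 2 := by
    nlinarith only [hE64, hρdd, mul_nonneg hE0.le hL0.le]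
  have he16P : 16 * (P * E) < ρ * d ^ 2 := by
    nlinarith only [hE64, hρdd, mul_le_mul_of_nonneg_left hP1 hE0.le,
      mul_nonneg hE0.le hP0.le, mul_nonneg hE0.le hL0.le]
  have hC1d : C1 * E ≤ d / 2 := by nlinarith only [hC1E, hρ1, hd0]
  have h2C1 : 2 * (C1 * E) < d := by nlinarith only [hC1E, hρ1, hd0]
  set m : ℝ := L - c1 * E / 2 with hmdef
  have hρdled : ρ * d ≤ d := by nlinarith only [hρ1, hd0, hρ0]
  have hm0 : 0 < m := by
    rw [hmdef]; nlinarith only [hc1E, hρdled, hdL, hL0]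
  have hmL : m < L := by
    rw [hmdef]; linarith only [mul_pos hc10 hE0]
  have hPm : P + C1 * E ≤ m := by
    rw [hmdef]
    nlinarith only [hC1E, hc1E, hρdled, hddef, hd0]
  have hLC1m : L - C1 * E ≤ m := by
    have h8 : C1 * (ρ * d) = (8 * c1) * (ρ * d) := by linarith only [hC1ρd, hc1ρd]
    have h8' : C1 = 8 * c1 := mul_right_cancel₀ (ne_of_gt hρd0) h8
    have h8E : C1 * E = 8 * (c1 * E) := by rw [h8']; ring
    rw [hmdef]
    linarith only [h8E, mul_nonneg hc10.le hE0.le]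
  have hcf : (C1 * E) ^ 2 ≤ L * (c1 * E) := by
    have e1 : C1 * E * (ρ * d) = 2 * (L * E) := by linear_combination E * hC1ρd
    have e1sq : (C1 * E) ^ 2 * (ρ * d) ^ 2 = 4 * (L * E) ^ 2 := by
      linear_combination (C1 * E * (ρ * d) + 2 * (L * E)) * e1
    have e2 : L * (c1 * E) * (4 * (ρ * d)) = L ^ 2 * E := by linear_combination (L * E) * hc1ρd
    have e2' : L * (c1 * E) * (4 * (ρ * d) ^ 2) = L ^ 2 * E * (ρ * d) := by
      linear_combination (ρ * d) * e2
    have hint : 16 * (L * E) ^ 2 ≤ L ^ 2 * E * (ρ * d) := by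
      nlinarith only [mul_le_mul_of_nonneg_left h16E (mul_nonneg (sq_nonneg L) hE0.le),
        mul_nonneg (sq_nonneg L) hE0.le]
    have h5 : (C1 * E) ^ 2 * (4 * (ρ * d) ^ 2) ≤ L * (c1 * E) * (4 * (ρ * d) ^ 2) := by
      nlinarith only [e1sq, e2', hint]
    exact le_of_mul_le_mul_right h5 (by nlinarith only [hρd0])
  -- the quadratic identity over ℂ
  have hquad : ∀ x : ℂ, (ρ : ℂ) * (x - (L : ℂ)) * (x - (P : ℂ)) = (ρ : ℂ) * x ^ 2 - x + (1 - (ρ : ℂ)) := by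
    intro x
    have h1 : ((ρ * (L + P) : ℝ) : ℂ) = 1 := by rw [hsum]; norm_num
    have h2 : ((ρ * (L * P) : ℝ) : ℂ) = 1 - (ρ : ℂ) := by rw [hprod]; push_cast; ring
    push_cast at h1 h2
    linear_combination (-x) * h1 + h2
  -- core estimate: if a is the root near L, then moduli estimates hold
  have core : ∀ a b : ℂ,
      ρ * (Complex.abs ((L : ℂ) - a) * Complex.abs ((L : ℂ) - b)) = E * L →
      ρ * (Complex.abs ((P : ℂ) - a) * Complex.abs ((P : ℂ) - b)) = E * P →
      (ρ : ℂ) * ((a - (L : ℂ)) * (a - (P : ℂ))) = e * a →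
      Complex.abs ((L : ℂ) - a) ≤ d / 4 →
      Complex.abs a ≤ m ∧ L - C1 * E ≤ Complex.abs a ∧ Complex.abs b ≤ P + C1 * E := by
    intro a b haL haP hroot ha4
    have habs_LP : Complex.abs ((L : ℂ) - (P : ℂ)) = d := by
      rw [show (L : ℂ) - (P : ℂ) = ((d : ℝ) : ℂ) by rw [hddef]; push_cast; ring,
        Complex.abs_ofReal, abs_of_pos hd0]
    have tri1 : d ≤ Complex.abs ((L : ℂ) - a) + Complex.abs ((P : ℂ) - a) := by
      calc d = Complex.abs ((L : ℂ) - (P : ℂ)) := habs_LP.symm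
        _ ≤ Complex.abs ((L : ℂ) - a) + Complex.abs (a - (P : ℂ)) := Complex.abs.sub_le _ _ _
        _ = Complex.abs ((L : ℂ) - a) + Complex.abs ((P : ℂ) - a) := by
            rw [AbsoluteValue.map_sub Complex.abs a]
    have hPa : 3 * (d / 4) ≤ Complex.abs ((P : ℂ) - a) := by linarith only [tri1, ha4]
    have hb_nn : 0 ≤ Complex.abs ((P : ℂ) - b) := Complex.abs.nonneg _
    have ha_nn : 0 ≤ Complex.abs ((L : ℂ) - a) := Complex.abs.nonneg _
    have hbP' : ρ * d * Complex.abs ((P : ℂ) - b) ≤ 2 * (L * E) := by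
      have hint := mul_le_mul_of_nonneg_left
        (show d ≤ (4 / 3) * Complex.abs ((P : ℂ) - a) by linarith only [hPa])
        (mul_nonneg hρ0.le hb_nn)
      have hint2 := mul_le_mul_of_nonneg_left hP1 hE0.le
      nlinarith only [hint, haP, hint2, mul_nonneg hE0.le hL0.le]
    have hbPC1 : Complex.abs ((P : ℂ) - b) ≤ C1 * E := by
      have hq : ρ * d * (C1 * E) = 2 * (L * E) := by linear_combination E * hC1ρd
      have h2 : ρ * d * Complex.abs ((P : ℂ) - b) ≤ ρ * d * (C1 * E) := by
        linarith only [hbP', hq]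
      exact le_of_mul_le_mul_left h2 hρd0
    have tri2 : d ≤ Complex.abs ((L : ℂ) - b) + Complex.abs ((P : ℂ) - b) := by
      calc d = Complex.abs ((L : ℂ) - (P : ℂ)) := habs_LP.symm
        _ ≤ Complex.abs ((L : ℂ) - b) + Complex.abs (b - (P : ℂ)) := Complex.abs.sub_le _ _ _
        _ = Complex.abs ((L : ℂ) - b) + Complex.abs ((P : ℂ) - b) := by
            rw [AbsoluteValue.map_sub Complex.abs b]
    have hLb : d / 2 ≤ Complex.abs ((L : ℂ) - b) := by linarith only [tri2, hbPC1, hC1d]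
    have haL' : ρ * d * Complex.abs ((L : ℂ) - a) ≤ 2 * (L * E) := by
      have hint := mul_le_mul_of_nonneg_left
        (show d ≤ 2 * Complex.abs ((L : ℂ) - b) by linarith only [hLb])
        (mul_nonneg hρ0.le ha_nn)
      nlinarith only [hint, haL]
    have haLC1 : Complex.abs ((L : ℂ) - a) ≤ C1 * E := by
      have hq : ρ * d * (C1 * E) = 2 * (L * E) := by linear_combination E * hC1ρd
      have h2 : ρ * d * Complex.abs ((L : ℂ) - a) ≤ ρ * d * (C1 * E) := by
        linarith only [haL', hq]
      exact le_of_mul_le_mul_left h2 hρd0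
    -- perturbation analysis
    set u : ℂ := a - (L : ℂ) with hudef
    have hu_abs : Complex.abs u ≤ C1 * E := by
      rw [hudef, AbsoluteValue.map_sub Complex.abs]
      exact haLC1
    have hdC : ((d : ℝ) : ℂ) = (L : ℂ) - (P : ℂ) := by rw [hddef]; push_cast; ring
    have hu_root : (ρ : ℂ) * u * (u + ((d : ℝ) : ℂ)) = e * ((L : ℂ) + u) := by
      rw [hudef, hdC]; linear_combination hroot
    have habsd : Complex.abs ((d : ℝ) : ℂ) = d := by
      rw [Complex.abs_ofReal, abs_of_pos hd0]
    have habs_du : d / 2 ≤ Complex.abs (((d : ℝ) : ℂ) + u) := by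
      have tri3 : Complex.abs ((d : ℝ) : ℂ) ≤ Complex.abs (((d : ℝ) : ℂ) + u) + Complex.abs u := by
        calc Complex.abs ((d : ℝ) : ℂ) = Complex.abs ((((d : ℝ) : ℂ) + u) + (-u)) := by ring_nf
          _ ≤ Complex.abs (((d : ℝ) : ℂ) + u) + Complex.abs (-u) := Complex.abs.add_le _ _
          _ = Complex.abs (((d : ℝ) : ℂ) + u) + Complex.abs u := by
              rw [Complex.abs.map_neg]
      linarith only [tri3, habsd, hu_abs, hC1d]
    have hdu0 : ((d : ℝ) : ℂ) + u ≠ 0 := by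
      intro h
      rw [h] at habs_du
      simp at habs_du
      linarith only [habs_du, hd0]
    have hρCne : (ρ : ℂ) ≠ 0 := Complex.ofReal_ne_zero.mpr (ne_of_gt hρ0)
    have hdCne : ((d : ℝ) : ℂ) ≠ 0 := Complex.ofReal_ne_zero.mpr (ne_of_gt hd0)
    have hI : (ρ : ℂ) * ((d : ℝ) : ℂ) * (((d : ℝ) : ℂ) + u) * u
        = e * (L : ℂ) * (((d : ℝ) : ℂ) + u) - e * u * (P : ℂ) := by
      linear_combination ((d : ℝ) : ℂ) * hu_root + e * u * hdC
    have hcast : ((L / (ρ * d) : ℝ) : ℂ) * ((ρ : ℂ) * ((d : ℝ) : ℂ)) = (L : ℂ) := by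
      push_cast
      field_simp
    have hFne : (ρ : ℂ) * ((d : ℝ) : ℂ) * (((d : ℝ) : ℂ) + u) ≠ 0 :=
      mul_ne_zero (mul_ne_zero hρCne hdCne) hdu0
    have hval' : u * ((ρ : ℂ) * ((d : ℝ) : ℂ) * (((d : ℝ) : ℂ) + u))
        = ((L / (ρ * d) : ℝ) : ℂ) * e * ((ρ : ℂ) * ((d : ℝ) : ℂ) * (((d : ℝ) : ℂ) + u))
          - e * u * (P : ℂ) := by
      linear_combination hI - e * (((d : ℝ) : ℂ) + u) * hcast
    have hval : u = ((L / (ρ * d) : ℝ) : ℂ) * e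
        - (e * u * (P : ℂ)) / ((ρ : ℂ) * ((d : ℝ) : ℂ) * (((d : ℝ) : ℂ) + u)) := by
      have h := hval'
      push_cast at h ⊢
      field_simp at h ⊢
      linear_combination h
    -- real part estimate
    have hXre : (((L / (ρ * d) : ℝ) : ℂ) * e).re = (L / (ρ * d)) * e.re :=
      Complex.re_ofReal_mul _ _
    have hre_split : u.re = (((L / (ρ * d) : ℝ) : ℂ) * e).re
        - ((e * u * (P : ℂ)) / ((ρ : ℂ) * ((d : ℝ) : ℂ) * (((d : ℝ) : ℂ) + u))).re := by
      nth_rewrite 1 [hval]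
      rw [Complex.sub_re]
    have habsY : Complex.abs ((e * u * (P : ℂ)) / ((ρ : ℂ) * ((d : ℝ) : ℂ) * (((d : ℝ) : ℂ) + u)))
        ≤ (E * (C1 * E) * P) / (ρ * d * (d / 2)) := by
      rw [map_div₀, map_mul, map_mul, map_mul, map_mul, habse, Complex.abs_ofReal,
        Complex.abs_ofReal, Complex.abs_ofReal, abs_of_pos hP0, abs_of_pos hρ0, abs_of_pos hd0]
      refine div_le_div₀ (by positivity) ?_ (mul_pos hρd0 (by linarith only [hd0])) ?_
      · exact mul_le_mul_of_nonneg_right (mul_le_mul_of_nonneg_left hu_abs hE0.le) hP0.le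
      · exact mul_le_mul_of_nonneg_left habs_du hρd0.le
    have harith1 : (L / (ρ * d)) * e.re ≤ (L / (ρ * d)) * (-E / 2) :=
      mul_le_mul_of_nonneg_left here (div_nonneg hL0.le hρd0.le)
    have hk1 : (L / (ρ * d)) * (-E / 2) = -(2 * (c1 * E)) := by
      rw [hc1def]; field_simp; ring
    have hk2 : (E * (C1 * E) * P) / (ρ * d * (d / 2)) ≤ c1 * E := by
      rw [div_le_iff₀ (mul_pos hρd0 (by linarith only [hd0] : (0:ℝ) < d / 2))]
      have t1 : E * (C1 * E) * P * (ρ * d) = 2 * (L * (E ^ 2 * P)) := by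
        linear_combination (E ^ 2 * P) * hC1ρd
      have t2 : c1 * E * (ρ * d * (d / 2)) * (4 * (ρ * d)) = L * E * (ρ * d) * (d / 2) := by
        linear_combination (E * (ρ * d * (d / 2))) * hc1ρd
      nlinarith only [t1, t2, hρd0,
        mul_le_mul_of_nonneg_left he16P.le (mul_nonneg hL0.le hE0.le)]
    have hre_u : u.re ≤ -(c1 * E) := by
      have hnegabs := (abs_le.mp (Complex.abs_re_le_abs
        ((e * u * (P : ℂ)) / ((ρ : ℂ) * ((d : ℝ) : ℂ) * (((d : ℝ) : ℂ) + u))))).1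
      linarith only [hre_split, hXre, harith1, hk1, hk2, habsY, hnegabs]
    -- modulus bounds
    have ha_eq : a = (L : ℂ) + u := by rw [hudef]; ring
    have hsq_a : (Complex.abs a) ^ 2 = (L + u.re) ^ 2 + u.im ^ 2 := by
      rw [Complex.sq_abs, Complex.normSq_apply, ha_eq]
      simp only [Complex.add_re, Complex.add_im, Complex.ofReal_re, Complex.ofReal_im]
      ring
    have hsq_u : (Complex.abs u) ^ 2 = u.re ^ 2 + u.im ^ 2 := by
      rw [Complex.sq_abs, Complex.normSq_apply]; ring
    have husq : u.re ^ 2 + u.im ^ 2 ≤ (C1 * E) ^ 2 := by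
      rw [← hsq_u]
      exact pow_le_pow_left₀ (Complex.abs.nonneg u) hu_abs 2
    have ham : Complex.abs a ≤ m := by
      have hsq : (Complex.abs a) ^ 2 ≤ m ^ 2 := by
        rw [hsq_a, hmdef]
        nlinarith only [hre_u, husq, hcf, mul_le_mul_of_nonneg_left hre_u hL0.le,
          sq_nonneg (c1 * E / 2), mul_nonneg hc10.le hE0.le, hL0]
      nlinarith only [hsq, Complex.abs.nonneg a, hm0]
    have halow : L - C1 * E ≤ Complex.abs a := by
      have tri : Complex.abs ((L : ℂ)) ≤ Complex.abs ((L : ℂ) - a) + Complex.abs a := by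
        calc Complex.abs ((L : ℂ)) = Complex.abs (((L : ℂ) - a) + a) := by congr 1; ring
          _ ≤ _ := Complex.abs.add_le _ _
      have habsL : Complex.abs ((L : ℂ)) = L := by rw [Complex.abs_ofReal, abs_of_pos hL0]
      linarith only [tri, habsL, haLC1]
    have hbub : Complex.abs b ≤ P + C1 * E := by
      have tri : Complex.abs b ≤ Complex.abs ((P : ℂ)) + Complex.abs ((P : ℂ) - b) := by
        calc Complex.abs b = Complex.abs ((P : ℂ) + (b - (P : ℂ))) := by congr 1; ring
          _ ≤ Complex.abs ((P : ℂ)) + Complex.abs (b - (P : ℂ)) := Complex.abs.add_le _ _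
          _ = Complex.abs ((P : ℂ)) + Complex.abs ((P : ℂ) - b) := by
              rw [AbsoluteValue.map_sub Complex.abs]
      have habsP : Complex.abs ((P : ℂ)) = P := by rw [Complex.abs_ofReal, abs_of_pos hP0]
      linarith only [tri, habsP, hbPC1]
    exact ⟨ham, halow, hbub⟩
  -- final step: from the modulus bounds to the conclusion
  have final : ∀ a b : ℂ, Complex.abs a ≤ m → L - C1 * E ≤ Complex.abs a →
      Complex.abs b ≤ P + C1 * E →
      ∃ c : ℝ, 1 < c ∧ ∃ M₀ : ℕ, ∀ M : ℕ, M₀ ≤ M →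
        a ^ M + b ^ M ≠ 0 ∧
        c ^ M ≤ Complex.abs (((κ : ℂ) ^ M + 1) / (a ^ M + b ^ M)) := by
    intro a b ham halow hbP
    have hBA : Complex.abs b < Complex.abs a := by
      linarith only [hbP, halow, h2C1, hddef]
    have hA0 : 0 < Complex.abs a := by linarith only [halow, hC1d, hdL, hL0, hd0]
    have hB0 : 0 ≤ Complex.abs b := Complex.abs.nonneg b
    have hBm : Complex.abs b ≤ m := le_trans hbP hPm
    set t : ℝ := L / m with htdef
    have ht1 : 1 < t := by rw [htdef]; exact (one_lt_div hm0).mpr hmL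
    set c : ℝ := (t + 1) / 2 with hcdef
    have hc1' : 1 < c := by rw [hcdef]; linarith only [ht1]
    have hc0 : 0 < c := by linarith only [hc1']
    have hct : c < t := by rw [hcdef]; linarith only [ht1]
    have htc : 1 < t / c := (one_lt_div hc0).mpr hct
    obtain ⟨M₁, hM₁⟩ := pow_unbounded_of_one_lt (2 : ℝ) htc
    refine ⟨c, hc1', M₁ + 1, ?_⟩
    intro M hM
    have hMne : M ≠ 0 := by omega
    have h2M : 2 ≤ (t / c) ^ M := by
      have hmono : (t / c) ^ M₁ ≤ (t / c) ^ M := pow_le_pow_right₀ htc.le (by omega)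
      linarith only [hM₁, hmono]
    have hnum : L ^ M ≤ Complex.abs ((κ : ℂ) ^ M + 1) := by
      have hcast : ((κ : ℂ)) ^ M + 1 = (((κ ^ M + 1 : ℝ)) : ℂ) := by push_cast; ring
      have hκM : (0:ℝ) ≤ κ ^ M := pow_nonneg hκ0.le M
      rw [hcast, Complex.abs_ofReal, abs_of_pos (by linarith only [hκM])]
      rcases le_total 1 κ with h | h
      · have hLeq : L = κ := by rw [hLdef]; exact max_eq_right h
        rw [hLeq]; linarith only []
      · have hLeq : L = 1 := by rw [hLdef]; exact max_eq_left h
        rw [hLeq, one_pow]; linarith only [hκM]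
    have habs_low : (Complex.abs a) ^ M - (Complex.abs b) ^ M ≤ Complex.abs (a ^ M + b ^ M) := by
      have h := Complex.abs.add_le (a ^ M + b ^ M) (-(b ^ M))
      rw [add_neg_cancel_right, Complex.abs.map_neg, map_pow, map_pow] at h
      linarith only [h]
    have hpowBA : (Complex.abs b) ^ M < (Complex.abs a) ^ M := pow_lt_pow_left₀ hBA hB0 hMne
    have hden_pos : 0 < Complex.abs (a ^ M + b ^ M) := by linarith only [habs_low, hpowBA]
    have hne : a ^ M + b ^ M ≠ 0 := by
      intro h
      rw [h] at hden_pos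
      simp at hden_pos
    have hden_le : Complex.abs (a ^ M + b ^ M) ≤ 2 * m ^ M := by
      have h := Complex.abs.add_le (a ^ M) (b ^ M)
      rw [map_pow, map_pow] at h
      have h1 : (Complex.abs a) ^ M ≤ m ^ M := pow_le_pow_left₀ (Complex.abs.nonneg a) ham M
      have h2 : (Complex.abs b) ^ M ≤ m ^ M := pow_le_pow_left₀ hB0 hBm M
      linarith only [h, h1, h2]
    refine ⟨hne, ?_⟩
    rw [map_div₀]
    have hmM : 0 < m ^ M := pow_pos hm0 M
    have hcM : 0 < c ^ M := pow_pos hc0 M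
    have hkey : 2 * c ^ M ≤ t ^ M := by
      rw [div_pow] at h2M
      have := (le_div_iff₀ hcM).mp h2M
      linarith only [this]
    have hLM : L ^ M = t ^ M * m ^ M := by
      rw [htdef, div_pow, div_mul_cancel₀]
      exact ne_of_gt hmM
    have hchain : L ^ M / (2 * m ^ M)
        ≤ Complex.abs ((κ : ℂ) ^ M + 1) / Complex.abs (a ^ M + b ^ M) :=
      div_le_div₀ (Complex.abs.nonneg _) hnum hden_pos hden_le
    have hfin : c ^ M ≤ L ^ M / (2 * m ^ M) := by
      rw [hLM, le_div_iff₀ (by linarith only [hmM])]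
      nlinarith only [mul_le_mul_of_nonneg_right hkey hmM.le]
    linarith only [hchain, hfin]
  -- main assembly
  intro μp μm hfac
  have hρCne : (ρ : ℂ) ≠ 0 := Complex.ofReal_ne_zero.mpr (ne_of_gt hρ0)
  have hfacC : ∀ x : ℂ, (ρ : ℂ) * (x - μp) * (x - μm)
      = (ρ : ℂ) * (x - (L : ℂ)) * (x - (P : ℂ)) - e * x := by
    intro x
    have h1 := hfac x
    rw [hgam] at h1
    have h2 := hquad x
    linear_combination -h1 - h2
  have hevL : (ρ : ℂ) * (((L : ℂ) - μp) * ((L : ℂ) - μm)) = -(e * (L : ℂ)) := by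
    linear_combination hfacC (L : ℂ)
  have hevP : (ρ : ℂ) * (((P : ℂ) - μp) * ((P : ℂ) - μm)) = -(e * (P : ℂ)) := by
    linear_combination hfacC (P : ℂ)
  have hmulL : ρ * (Complex.abs ((L : ℂ) - μp) * Complex.abs ((L : ℂ) - μm)) = E * L := by
    have h := congrArg Complex.abs hevL
    rwa [map_mul, map_mul, Complex.abs.map_neg, map_mul, Complex.abs_ofReal,
      Complex.abs_ofReal, abs_of_pos hρ0, abs_of_pos hL0, habse] at h
  have hmulP : ρ * (Complex.abs ((P : ℂ) - μp) * Complex.abs ((P : ℂ) - μm)) = E * P := by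
    have h := congrArg Complex.abs hevP
    rwa [map_mul, map_mul, Complex.abs.map_neg, map_mul, Complex.abs_ofReal,
      Complex.abs_ofReal, abs_of_pos hρ0, abs_of_pos hP0, habse] at h
  have hrootp : (ρ : ℂ) * ((μp - (L : ℂ)) * (μp - (P : ℂ))) = e * μp := by
    linear_combination -hfacC μp
  have hrootm : (ρ : ℂ) * ((μm - (L : ℂ)) * (μm - (P : ℂ))) = e * μm := by
    linear_combination -hfacC μm
  have hdi : Complex.abs ((L : ℂ) - μp) ≤ d / 4 ∨ Complex.abs ((L : ℂ) - μm) ≤ d / 4 := by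
    by_contra hcon
    push_neg at hcon
    obtain ⟨h1, h2⟩ := hcon
    have hp := mul_lt_mul'' h1 h2 (by linarith only [hd0]) (by linarith only [hd0])
    nlinarith only [hmulL, hp, hELd, mul_lt_mul_of_pos_left hp hρ0, hE0, hL0]
  rcases hdi with hcase | hcase
  · obtain ⟨A1, A2, A3⟩ := core μp μm hmulL hmulP hrootp hcase
    exact final μp μm A1 A2 A3
  · have hmulL' : ρ * (Complex.abs ((L : ℂ) - μm) * Complex.abs ((L : ℂ) - μp)) = E * L := by
      linarith only [hmulL]
    have hmulP' : ρ * (Complex.abs ((P : ℂ) - μm) * Complex.abs ((P : ℂ) - μp)) = E * P := by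
      linarith only [hmulP]
    obtain ⟨A1, A2, A3⟩ := core μm μp hmulL' hmulP' hrootm hcase
    obtain ⟨c, hc, M₀, hall⟩ := final μm μp A1 A2 A3
    refine ⟨c, hc, M₀, fun M hM => ?_⟩
    obtain ⟨h1, h2⟩ := hall M hM
    rw [add_comm (μm ^ M) (μp ^ M)] at h1 h2
    exact ⟨h1, h2⟩
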